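/- Let q be an odd prime dividing m·n. Then for every x ∈ ℂ∖{0} one has the identity x^{2mn}·f̄(ζ_{2n}^{−1}·x^{−1}) = −f(x). Consequently, if (x,y) ∈ (ℂ∖{0})×ℂ satisfies y^q = f(x), then setting u := ζ_{2n}^{−1}·x^{−1} and v := ζ_{2q}·y·x^{−2mn/q} one has v^q = f̄(u); that is, the map μ(x,y) = (ζ_{2n}^{−1}x^{−1}, ζ_{2q}·y·x^{−2mn/q}) sends the affine curve y^q = f(x) into the conjugate curve y^q = f̄(x). -/

import Mathlib

open Complex Polynomial

noncomputable section

/-- `ζ_r = exp(2πi/r)`, a primitive `r`-th root of unity. -/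
def zetaRoot (r : ℕ) : ℂ := Complex.exp (2 * Real.pi * Complex.I / r)

lemma zetaRoot_pow_half (r : ℕ) (hr : r ≠ 0) : (zetaRoot (2 * r)) ^ r = -1 := by
  have hrc : (r : ℂ) ≠ 0 := Nat.cast_ne_zero.mpr hr
  unfold zetaRoot
  rw [← Complex.exp_nat_mul]
  have h : (r : ℂ) * (2 * Real.pi * Complex.I / ((2 * r : ℕ) : ℂ))
      = Real.pi * Complex.I := by
    have h2 : ((2 * r : ℕ) : ℂ) = 2 * (r : ℂ) := by push_cast; ring
    rw [h2]; field_simp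
  rw [h, Complex.exp_pi_mul_I]

theorem statement_13 (m n : ℕ) (hm : 2 ≤ m) (hn : 2 ≤ n)
    (a : Fin m → ℂ) (ha : ∀ i, a i ≠ 0)
    (q : ℕ) (hq : Nat.Prime q) (hodd : Odd q) (hdvd : q ∣ m * n)
    (f fbar : Polynomial ℂ)
    (hf : f = ∏ i : Fin m,
      ((Polynomial.X ^ n - Polynomial.C (a i)) *
        (Polynomial.X ^ n + Polynomial.C ((starRingEnd ℂ) (a i))⁻¹)))
    (hfbar : fbar = ∏ i : Fin m,
      ((Polynomial.X ^ n - Polynomial.C ((starRingEnd ℂ) (a i))) *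
        (Polynomial.X ^ n + Polynomial.C (a i)⁻¹)))
    (h0 : f.eval 0 = -1) :
    (∀ x : ℂ, x ≠ 0 →
      x ^ (2 * m * n) * fbar.eval ((zetaRoot (2 * n))⁻¹ * x⁻¹) = - f.eval x) ∧
    (∀ x y : ℂ, x ≠ 0 → y ^ q = f.eval x →
      (zetaRoot (2 * q) * y * x⁻¹ ^ (2 * m * n / q)) ^ q
        = fbar.eval ((zetaRoot (2 * n))⁻¹ * x⁻¹)) := by
  have hn0 : n ≠ 0 := by omega
  have hζn : (zetaRoot (2 * n)) ^ n = -1 := zetaRoot_pow_half n hn0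
  -- constant from f(0) = -1
  have hconst : (∏ i : Fin m, -(a i * ((starRingEnd ℂ) (a i))⁻¹)) = -1 := by
    have := h0
    rw [hf, eval_prod] at this
    simpa [zero_pow hn0] using this
  have main : ∀ x : ℂ, x ≠ 0 →
      x ^ (2 * m * n) * fbar.eval ((zetaRoot (2 * n))⁻¹ * x⁻¹) = - f.eval x := by
    intro x hx
    have hxn : x ^ n ≠ 0 := pow_ne_zero _ hx
    have hun : ((zetaRoot (2 * n))⁻¹ * x⁻¹) ^ n = -(x ^ n)⁻¹ := by
      rw [mul_pow, inv_pow, inv_pow, hζn]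
      field_simp
    rw [hfbar, hf, eval_prod, eval_prod]
    simp only [eval_mul, eval_sub, eval_add, eval_pow, eval_X, eval_C, hun]
    have hx2 : x ^ (2 * m * n) = ∏ _i : Fin m, (x ^ n) ^ 2 := by
      rw [Finset.prod_const, Finset.card_univ, Fintype.card_fin, ← pow_mul, ← pow_mul]
      ring_nf
    rw [hx2, ← Finset.prod_mul_distrib]
    have step : ∀ i : Fin m,
        (x ^ n) ^ 2 * ((-(x ^ n)⁻¹ - (starRingEnd ℂ) (a i)) * (-(x ^ n)⁻¹ + (a i)⁻¹))
        = (-(a i * ((starRingEnd ℂ) (a i))⁻¹))⁻¹ *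
          ((x ^ n - a i) * (x ^ n + ((starRingEnd ℂ) (a i))⁻¹)) := by
      intro i
      have ha1 : a i ≠ 0 := ha i
      have ha2 : (starRingEnd ℂ) (a i) ≠ 0 := by
        simpa using (star_ne_zero.mpr ha1)
      field_simp
      ring
    calc (∏ i : Fin m, (x ^ n) ^ 2 *
          ((-(x ^ n)⁻¹ - (starRingEnd ℂ) (a i)) * (-(x ^ n)⁻¹ + (a i)⁻¹)))
        = ∏ i : Fin m, ((-(a i * ((starRingEnd ℂ) (a i))⁻¹))⁻¹ *
          ((x ^ n - a i) * (x ^ n + ((starRingEnd ℂ) (a i))⁻¹))) :=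
          Finset.prod_congr rfl fun i _ => step i
      _ = (∏ i : Fin m, (-(a i * ((starRingEnd ℂ) (a i))⁻¹))⁻¹) *
          ∏ i : Fin m, ((x ^ n - a i) * (x ^ n + ((starRingEnd ℂ) (a i))⁻¹)) :=
          Finset.prod_mul_distrib
      _ = - ∏ i : Fin m, ((x ^ n - a i) * (x ^ n + ((starRingEnd ℂ) (a i))⁻¹)) := by
          rw [Finset.prod_inv_distrib, hconst]; ring
  refine ⟨main, ?_⟩
  intro x y hx hy
  have hq0 : q ≠ 0 := hq.ne_zero
  have hζq : (zetaRoot (2 * q)) ^ q = -1 := zetaRoot_pow_half q hq0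
  have hdvd2 : q ∣ 2 * m * n := by
    rw [mul_assoc]
    exact Dvd.dvd.mul_left hdvd 2
  have hdq : 2 * m * n / q * q = 2 * m * n := Nat.div_mul_cancel hdvd2
  have hxn : x ^ (2 * m * n) ≠ 0 := pow_ne_zero _ hx
  have h1 := main x hx
  have : fbar.eval ((zetaRoot (2 * n))⁻¹ * x⁻¹) = - f.eval x * (x ^ (2 * m * n))⁻¹ := by
    field_simp at h1 ⊢
    linear_combination h1
  rw [this, mul_pow, mul_pow, hζq, ← pow_mul, hdq, hy, inv_pow]
  ring
end
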